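/- arXiv:2602.05873 — 3 statements merged into one kernel-verified Lean document; each statement's English description precedes it below -/
import Mathlib

section
/- Let d be a positive natural number and let p, q : ℝ^d → ℝ be two probability density functions that are strictly positive everywhere, continuously differentiable, Lebesgue-integrable with ∫ p(θ) dθ = 1 and ∫ q(θ) dθ = 1. If for every θ ∈ ℝ^d the gradient of log p at θ equals the gradient of log q at θ (i.e., the two distributions have identical scores everywhere), then p = q. -/
open MeasureTheory

/-- Score matching implies distribution matching (Lemma 1): two strictly positive,
continuously differentiable probability densities on `ℝ^d` with identical scores
(gradients of their logs) everywhere are equal. -/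
theorem score_matching_implies_distribution_matching
    (d : ℕ) (hd : 0 < d)
    (p q : EuclideanSpace ℝ (Fin d) → ℝ)
    (hp_pos : ∀ θ, 0 < p θ) (hq_pos : ∀ θ, 0 < q θ)
    (hp_smooth : ContDiff ℝ 1 p) (hq_smooth : ContDiff ℝ 1 q)
    (hp_int : Integrable p) (hq_int : Integrable q)
    (hp_one : ∫ θ, p θ = 1) (hq_one : ∫ θ, q θ = 1)
    (hscore : ∀ θ, gradient (fun x => Real.log (p x)) θ
                 = gradient (fun x => Real.log (q x)) θ) :
    p = q := by
  -- differentiability of log ∘ p and log ∘ q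
  have hpd : ∀ θ, DifferentiableAt ℝ (fun x => Real.log (p x)) θ := fun θ =>
    (Real.differentiableAt_log (hp_pos θ).ne').comp θ
      (hp_smooth.differentiable one_ne_zero θ)
  have hqd : ∀ θ, DifferentiableAt ℝ (fun x => Real.log (q x)) θ := fun θ =>
    (Real.differentiableAt_log (hq_pos θ).ne').comp θ
      (hq_smooth.differentiable one_ne_zero θ)
  -- fderivs of the logs agree
  have hfd : ∀ θ, fderiv ℝ (fun x => Real.log (p x)) θ
      = fderiv ℝ (fun x => Real.log (q x)) θ := by
    intro θ
    have := congrArg (InnerProductSpace.toDual ℝ (EuclideanSpace ℝ (Fin d))) (hscore θ)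
    simpa [gradient] using this
  -- the difference of logs is constant
  set f : EuclideanSpace ℝ (Fin d) → ℝ :=
    fun x => Real.log (p x) - Real.log (q x) with hf
  have hfdiff : ∀ θ, DifferentiableAt ℝ f θ := fun θ => (hpd θ).sub (hqd θ)
  have hconst : ∀ θ, f θ = f 0 := by
    intro θ
    apply is_const_of_fderiv_eq_zero (fun x => hfdiff x)
    intro x
    have : fderiv ℝ f x = fderiv ℝ (fun y => Real.log (p y)) x
        - fderiv ℝ (fun y => Real.log (q y)) x := fderiv_sub (hpd x) (hqd x)
    rw [this, hfd x, sub_self]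
  -- hence p θ = exp c * q θ
  set c : ℝ := f 0 with hc
  have hpq : ∀ θ, p θ = Real.exp c * q θ := by
    intro θ
    have h1 : Real.log (p θ) = c + Real.log (q θ) := by
      have := hconst θ
      simp only [hf] at this
      linarith
    have := congrArg Real.exp h1
    rwa [Real.exp_log (hp_pos θ), Real.exp_add, Real.exp_log (hq_pos θ)] at this
  -- integrate to find exp c = 1
  have hint : ∫ θ, p θ = Real.exp c * ∫ θ, q θ := by
    rw [← integral_const_mul]
    exact integral_congr_ae (Filter.Eventually.of_forall fun θ => hpq θ)
  rw [hp_one, hq_one, mul_one] at hint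
  funext θ
  rw [hpq θ, ← hint, one_mul]
end

section
/- Let d be a positive natural number, let Σ and V be symmetric positive-definite d×d real matrices, let μ, m ∈ ℝ^d, and let β ∈ [0,1]. Then the matrix A := β·V⁻¹ + (1-β)·Σ⁻¹ is symmetric positive definite (hence invertible), and, setting V' := A⁻¹ and m' := V'·(β·V⁻¹·m + (1-β)·Σ⁻¹·μ), for every θ ∈ ℝ^d one has -(V')⁻¹·(θ - m') = β·(-V⁻¹·(θ - m)) + (1-β)·(-Σ⁻¹·(θ - μ)). Consequently the score of the Gaussian N(m', V') is the β-convex combination of the scores of the Gaussians N(m, V) and N(μ, Σ) at every point. -/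
lemma convex_posdef {d : ℕ} {M N : Matrix (Fin d) (Fin d) ℝ} (hM : M.PosDef) (hN : N.PosDef)
    {β : ℝ} (hβ0 : 0 ≤ β) (hβ1 : β ≤ 1) : (β • M + (1 - β) • N).PosDef := by
  rw [Matrix.posDef_iff_dotProduct_mulVec]
  constructor
  · show (β • M + (1 - β) • N).conjTranspose = _
    rw [Matrix.conjTranspose_add, Matrix.conjTranspose_smul, Matrix.conjTranspose_smul,
      hM.isHermitian.eq, hN.isHermitian.eq, star_trivial, star_trivial]
  · intro x hx
    have h1 : (β • M + (1 - β) • N).mulVec x = β • M.mulVec x + (1 - β) • N.mulVec x := by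
      rw [Matrix.add_mulVec, Matrix.smul_mulVec, Matrix.smul_mulVec]
    rw [h1, dotProduct_add, dotProduct_smul, dotProduct_smul]
    have hMx := hM.dotProduct_mulVec_pos hx
    have hNx := hN.dotProduct_mulVec_pos hx
    simp only [RCLike.re_to_real, smul_eq_mul] at *
    rcases lt_or_eq_of_le hβ0 with h | h
    · have : 0 ≤ 1 - β := by linarith
      exact add_pos_of_pos_of_nonneg (mul_pos h hMx) (mul_nonneg this hNx.le)
    · rw [← h]; simp only [zero_mul, sub_zero, zero_add, one_mul]; exact hNx

/-- Closedness of the Gaussian family under convex combinations of scores: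
for symmetric positive-definite `Σ` (here `S`) and `V`, means `μ`, `m` and `β ∈ [0,1]`,
the matrix `A = β·V⁻¹ + (1-β)·Σ⁻¹` is symmetric positive definite, and with
`V' = A⁻¹`, `m' = V'·(β·V⁻¹·m + (1-β)·Σ⁻¹·μ)`, the score `-(V')⁻¹(θ - m')` of
`N(m', V')` equals `β·(-V⁻¹(θ - m)) + (1-β)·(-Σ⁻¹(θ - μ))` at every `θ`. -/
theorem gaussian_family_score_convex_combination
    (d : ℕ) (hd : 0 < d)
    (S V : Matrix (Fin d) (Fin d) ℝ) (hS : S.PosDef) (hV : V.PosDef)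
    (μ m : Fin d → ℝ) (β : ℝ) (hβ0 : 0 ≤ β) (hβ1 : β ≤ 1)
    (A : Matrix (Fin d) (Fin d) ℝ) (hA : A = β • V⁻¹ + (1 - β) • S⁻¹)
    (V' : Matrix (Fin d) (Fin d) ℝ) (hV' : V' = A⁻¹)
    (m' : Fin d → ℝ) (hm' : m' = V'.mulVec (β • V⁻¹.mulVec m + (1 - β) • S⁻¹.mulVec μ)) :
    A.PosDef ∧
      ∀ θ : Fin d → ℝ,
        -(V'⁻¹.mulVec (θ - m'))
          = β • (-(V⁻¹.mulVec (θ - m))) + (1 - β) • (-(S⁻¹.mulVec (θ - μ))) := by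
  have hApos : A.PosDef := by
    rw [hA]; exact convex_posdef hV.inv hS.inv hβ0 hβ1
  refine ⟨hApos, fun θ => ?_⟩
  have hAinv : A⁻¹⁻¹ = A := Matrix.nonsing_inv_nonsing_inv A hApos.det_pos.ne'.isUnit
  have hAm' : A.mulVec m' = β • V⁻¹.mulVec m + (1 - β) • S⁻¹.mulVec μ := by
    rw [hm', hV', Matrix.mulVec_mulVec, Matrix.mul_nonsing_inv A hApos.det_pos.ne'.isUnit,
      Matrix.one_mulVec]
  rw [hV', hAinv, Matrix.mulVec_sub, hAm', hA, Matrix.add_mulVec,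
    Matrix.smul_mulVec, Matrix.smul_mulVec, Matrix.mulVec_sub, Matrix.mulVec_sub]
  module
end

section
/- Let (Θ, 𝒜, μ) be a measure space, let d be a positive natural number, let w : Θ → ℝ be a nonnegative measurable function, let α ≥ 0 be a real number, and let a, b : Θ → ℝ^d be measurable functions. Define v* : Θ → ℝ^d by v*(θ) := (1/(1+α)) • (α • a(θ) + b(θ)). Then for every measurable function v : Θ → ℝ^d, the lower Lebesgue integral ∫⁻ w(θ)·(α·‖v*(θ) - a(θ)‖² + ‖v*(θ) - b(θ)‖²) dμ(θ) is less than or equal to ∫⁻ w(θ)·(α·‖v(θ) - a(θ)‖² + ‖v(θ) - b(θ)‖²) dμ(θ). -/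
open MeasureTheory

lemma prox_pointwise {E : Type*} [NormedAddCommGroup E] [NormedSpace ℝ E]
    (α : ℝ) (hα : 0 ≤ α) (a b v : E) :
    α * ‖(1 / (1 + α)) • (α • a + b) - a‖ ^ 2 + ‖(1 / (1 + α)) • (α • a + b) - b‖ ^ 2
      ≤ α * ‖v - a‖ ^ 2 + ‖v - b‖ ^ 2 := by
  have h1 : (0:ℝ) < 1 + α := by linarith
  have h1' : (1 + α) ≠ 0 := ne_of_gt h1
  have hva : (1 / (1 + α)) • (α • a + b) - a = (1 / (1 + α)) • (b - a) := by
    match_scalars <;> field_simp <;> ring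
  have hvb : (1 / (1 + α)) • (α • a + b) - b = (α / (1 + α)) • (a - b) := by
    match_scalars <;> field_simp <;> ring
  rw [hva, hvb, norm_smul, norm_smul]
  have hab : ‖b - a‖ = ‖a - b‖ := norm_sub_rev _ _
  rw [hab]
  rw [Real.norm_eq_abs, Real.norm_eq_abs, abs_of_pos (by positivity : (0:ℝ) < 1/(1+α)),
    abs_of_nonneg (by positivity : (0:ℝ) ≤ α/(1+α))]
  have htri : ‖a - b‖ ≤ ‖v - a‖ + ‖v - b‖ := by
    have := norm_sub_le_norm_sub_add_norm_sub a v b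
    rwa [norm_sub_rev a v] at this
  set c := ‖a - b‖ with hc
  set x := ‖v - a‖ with hx
  set y := ‖v - b‖ with hy
  have hcn : 0 ≤ c := norm_nonneg _
  have hxn : 0 ≤ x := norm_nonneg _
  have hyn : 0 ≤ y := norm_nonneg _
  have expand : α * (1 / (1 + α) * c) ^ 2 + (α / (1 + α) * c) ^ 2 = (α * c ^ 2) / (1 + α) := by
    field_simp
  rw [expand, div_le_iff₀ h1]
  have hcsq : c ^ 2 ≤ (x + y) ^ 2 := by nlinarith
  nlinarith [sq_nonneg (α * x - y), mul_le_mul_of_nonneg_left hcsq hα]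

/-- Functional (integrated) minimization of the proximal score-matching objective:
with weight `w ≥ 0`, `α ≥ 0`, and vector fields `a, b`, the pointwise weighted average
`v*(θ) = (1/(1+α)) • (α • a(θ) + b(θ))` minimizes the weighted integral objective
`∫⁻ w(θ)·(α‖v(θ) - a(θ)‖² + ‖v(θ) - b(θ)‖²) dμ` over measurable vector fields `v`. -/
theorem proximal_integral_minimizer
    (Θ : Type*) [MeasurableSpace Θ] (μ : Measure Θ)
    (d : ℕ) (hd : 0 < d)
    (w : Θ → ℝ) (hw_meas : Measurable w) (hw_nonneg : ∀ θ, 0 ≤ w θ)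
    (α : ℝ) (hα : 0 ≤ α)
    (a b : Θ → EuclideanSpace ℝ (Fin d)) (ha : Measurable a) (hb : Measurable b)
    (vstar : Θ → EuclideanSpace ℝ (Fin d))
    (hvstar : ∀ θ, vstar θ = (1 / (1 + α)) • (α • a θ + b θ)) :
    ∀ v : Θ → EuclideanSpace ℝ (Fin d), Measurable v →
      ∫⁻ θ, ENNReal.ofReal
          (w θ * (α * ‖vstar θ - a θ‖ ^ 2 + ‖vstar θ - b θ‖ ^ 2)) ∂μ
        ≤ ∫⁻ θ, ENNReal.ofReal
            (w θ * (α * ‖v θ - a θ‖ ^ 2 + ‖v θ - b θ‖ ^ 2)) ∂μ := by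
  intro v hv
  apply lintegral_mono
  intro θ
  apply ENNReal.ofReal_le_ofReal
  apply mul_le_mul_of_nonneg_left _ (hw_nonneg θ)
  rw [hvstar θ]
  exact prox_pointwise α hα (a θ) (b θ) (v θ)
end
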